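/- Let (Z, E) be a reflexive graph whose relation E is antisymmetric, and suppose the concept lattice of the associated polarity (Z, Z, I_{Eᶜ}) satisfies the completely distributive law. Then for every u ∈ Z, u_r = ⨆ {w_s | w ∈ Z, ¬(u_s ≤ w_s)} in the concept lattice. -/

import Mathlib

open Set

universe u v

/-- The object concept `z_s = ({z}^{↑↓}, {z}^↑)`. -/
def objectConcept {A X : Type*} (I : A → X → Prop) (a : A) : Concept A X I where
  extent := lowerPolar I (upperPolar I {a})
  intent := upperPolar I {a}
  upperPolar_extent := upperPolar_lowerPolar_upperPolar (r := I) {a}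
  lowerPolar_intent := rfl

/-- The attribute concept `z_r = ({z}^↓, {z}^{↓↑})`. -/
def attributeConcept {A X : Type*} (I : A → X → Prop) (x : X) : Concept A X I where
  extent := lowerPolar I {x}
  intent := upperPolar I (lowerPolar I {x})
  upperPolar_extent := rfl
  lowerPolar_intent := lowerPolar_upperPolar_lowerPolar (r := I) {x}

/-- If `(Z, E)` is a reflexive, antisymmetric graph whose associated concept lattice
satisfies the completely distributive law, then for every `u ∈ Z`,
`u_r = ⨆ {w_s | w ∈ Z, ¬ u_s ≤ w_s}`. -/
theorem attributeConcept_eq_sSup {Z : Type*} (E : Z → Z → Prop)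
    (hrefl : Reflexive E)
    (hanti : ∀ z z' : Z, E z z' → E z' z → z = z')
    (hdist : ∀ (ι : Type u) (κ : ι → Type v)
      (f : (i : ι) → κ i → Concept Z Z (fun a x => ¬ E a x)),
      ⨅ i, ⨆ j, f i j = ⨆ g : (i : ι) → κ i, ⨅ i, f i (g i)) :
    ∀ u : Z, attributeConcept (fun a x => ¬ E a x) u =
      sSup {c : Concept Z Z (fun a x => ¬ E a x) | ∃ w : Z,
        c = objectConcept (fun a x => ¬ E a x) w ∧
        ¬ objectConcept (fun a x => ¬ E a x) u ≤ objectConcept (fun a x => ¬ E a x) w} := by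
  set I : Z → Z → Prop := fun a x => ¬ E a x with hI
  -- Binary distributivity (inequality form), derived from `hdist`.
  have hdistrib : ∀ a b c : Concept Z Z I, a ⊓ (b ⊔ c) ≤ (a ⊓ b) ⊔ (a ⊓ c) := by
    intro a b c
    have h := hdist (ULift.{u} Bool) (fun _ => ULift.{v} Bool)
      (fun i j => cond i.down (cond j.down b c) a)
    have h1 : a ⊓ (b ⊔ c) ≤
        ⨅ i : ULift.{u} Bool, ⨆ j : ULift.{v} Bool, cond i.down (cond j.down b c) a := by
      refine le_iInf fun i => ?_
      obtain ⟨(_ | _)⟩ := i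
      · exact inf_le_left.trans (le_iSup_of_le ⟨true⟩ le_rfl)
      · refine inf_le_right.trans (sup_le ?_ ?_)
        · exact le_iSup_of_le ⟨true⟩ le_rfl
        · exact le_iSup_of_le ⟨false⟩ le_rfl
    rw [h] at h1
    refine h1.trans (iSup_le fun g => ?_)
    have ha : (⨅ i : ULift.{u} Bool, cond i.down (cond (g i).down b c) a) ≤ a :=
      iInf_le_of_le ⟨false⟩ le_rfl
    have hbc : (⨅ i : ULift.{u} Bool, cond i.down (cond (g i).down b c) a) ≤
        cond (g ⟨true⟩).down b c := iInf_le_of_le ⟨true⟩ le_rfl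
    rcases hgt : (g ⟨true⟩).down with _ | _
    · rw [hgt] at hbc
      exact le_sup_of_le_right (le_inf ha hbc)
    · rw [hgt] at hbc
      exact le_sup_of_le_left (le_inf ha hbc)
  -- Pseudo-transitivity of `E`.
  have htrans : ∀ w u x : Z, E w u → E u x → E w x := by
    intro w u x hwu hux
    by_contra hwx
    set us := objectConcept I u
    set ws := objectConcept I w
    set ur := attributeConcept I u
    -- `u` belongs to the extent of the left-hand side.
    have hu_lhs : u ∈ (us ⊓ (ws ⊔ ur)).extent := by
      rw [Concept.extent_inf]
      refine ⟨subset_lowerPolar_upperPolar (r := I) {u} rfl, ?_⟩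
      rw [Concept.extent_sup]
      intro y hy
      -- `hy : y ∈ ws.snd ∩ ur.snd`
      have hwy : ¬ E w y := hy.1 rfl
      have hyu : E y u := by
        by_contra hyu
        have hymem : y ∈ lowerPolar I {u} := by
          intro z hz; cases hz; exact hyu
        exact hy.2 hymem (hrefl y)
      intro hEuy
      -- `I u y` is `¬ E u y`; suppose `E u y`
      exact hwy (hanti u y hEuy hyu ▸ hwu)
    -- `u` does not belong to the extent of the right-hand side.
    have hu_rhs : u ∉ ((us ⊓ ws) ⊔ (us ⊓ ur)).extent := by
      intro hmem
      rw [Concept.extent_sup] at hmem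
      have h1 : u ∈ (us ⊓ ws).intent := by
        rw [Concept.intent_inf]
        rintro a ⟨hau, haw⟩ hEau
        -- `hau : a ∈ us.fst`, `haw : a ∈ ws.fst`
        have hEua : E u a := by
          by_contra hEua
          have : a ∉ lowerPolar I (upperPolar I {u}) := by
            intro h
            exact h (fun z hz => by cases hz; exact hEua) (hrefl a)
          exact this hau
        have hau' : a = u := hanti a u hEau hEua
        subst hau'
        -- now `haw : u ∈ ws.fst`, giving `E u x → E w x`
        exact haw (fun z hz => by cases hz; exact hwx) hux
      have h2 : u ∈ (us ⊓ ur).intent := by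
        rw [Concept.intent_inf]
        rintro a ⟨-, hau⟩
        exact hau rfl
      exact hmem ⟨h1, h2⟩ (hrefl u)
    exact hu_rhs (Concept.extent_subset_extent_iff.2 (hdistrib us ws ur) hu_lhs)
  intro u
  refine le_antisymm ?_ ?_
  · -- `u_r ≤ sSup S`
    rw [← Concept.intent_subset_intent_iff]
    rw [Concept.intent_sSup]
    intro y hy
    intro a ha
    have hanu : ¬ E a u := ha rfl
    have hmem : objectConcept I a ∈ {c : Concept Z Z I | ∃ w : Z,
        c = objectConcept I w ∧ ¬ objectConcept I u ≤ objectConcept I w} := by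
      refine ⟨a, rfl, fun hle => ?_⟩
      have hsub := Concept.intent_subset_intent_iff.2 hle
      have hu_in : u ∈ (objectConcept I a).intent := fun z hz => by cases hz; exact hanu
      exact hsub hu_in rfl (hrefl u)
    have := Set.mem_iInter₂.1 hy (objectConcept I a) hmem
    exact this rfl
  · -- `sSup S ≤ u_r`
    refine sSup_le fun c hc => ?_
    obtain ⟨w, rfl, hns⟩ := hc
    have hEwu : ¬ E w u := by
      intro hEwu
      refine hns ?_
      rw [← Concept.intent_subset_intent_iff]
      intro y hy z hz
      cases hz
      exact fun hEuy => hy rfl (htrans w u y hEwu hEuy)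
    rw [← Concept.extent_subset_extent_iff]
    intro a ha
    intro z hz
    cases hz
    exact ha (fun b hb => by cases hb; exact hEwu)
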